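/- Let n ≥ 1 and let T be a finite collection of pairwise distinct stabilizer groups of n-qubit signed Pauli matrices with |T| ≥ 2. For S ∈ T write ρ_S := 2^{-n} Σ_{Q ∈ S} Q, and for S, S' ∈ T define the correlation c(S,S') := (1/(2·4^n)) · Σ_{(ε,a)} tr(P_{ε,a} · ρ_S) · tr(P_{ε,a} · ρ_{S'}), the sum over all pairs (ε,a) with ε ∈ {1,−1}, a : Fin n → Fin 4. Then the average absolute correlation satisfies (1/|T|²) · Σ_{S ∈ T} Σ_{S' ∈ T} |c(S,S')| ≤ 2^{-n}. (This is the content of the statement that the statistical dimension on average of the stabilizer states at threshold 2^{-n} under the uniform distribution on Pauli measurements is at least half the number of stabilizer states.) -/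

import Mathlib

open Matrix

noncomputable section

/-- The four single-qubit Pauli matrices: `I₂`, `X`, `Y`, `Z`. -/
def pauli : Fin 4 → Matrix (Fin 2) (Fin 2) ℂ
  | 0 => 1
  | 1 => !![0, 1; 1, 0]
  | 2 => !![0, -Complex.I; Complex.I, 0]
  | 3 => !![1, 0; 0, -1]

/-- The `n`-fold Kronecker product `A_{a 0} ⊗ ⋯ ⊗ A_{a (n-1)}` of single-qubit Pauli
matrices, realized as a matrix indexed by bit strings. -/
def pauliTensor {n : ℕ} (a : Fin n → Fin 4) :
    Matrix (Fin n → Fin 2) (Fin n → Fin 2) ℂ :=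
  fun z w => ∏ i, pauli (a i) (z i) (w i)

/-- A signed `n`-qubit Pauli matrix: `ε • (A₁ ⊗ ⋯ ⊗ Aₙ)` with `ε ∈ {1, -1}`. -/
def IsSignedPauli {n : ℕ} (M : Matrix (Fin n → Fin 2) (Fin n → Fin 2) ℂ) : Prop :=
  ∃ (ε : ℂ) (a : Fin n → Fin 4), (ε = 1 ∨ ε = -1) ∧ M = ε • pauliTensor a

/-- A stabilizer group: a set of signed `n`-qubit Pauli matrices containing the identity,
closed under multiplication, pairwise commuting, not containing `-I`, of size `2^n`. -/
structure IsStabilizerGroup (n : ℕ)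
    (S : Set (Matrix (Fin n → Fin 2) (Fin n → Fin 2) ℂ)) : Prop where
  mem_pauli : ∀ M ∈ S, IsSignedPauli M
  one_mem : (1 : Matrix (Fin n → Fin 2) (Fin n → Fin 2) ℂ) ∈ S
  mul_mem : ∀ M ∈ S, ∀ N ∈ S, M * N ∈ S
  mul_comm : ∀ M ∈ S, ∀ N ∈ S, M * N = N * M
  neg_one_not_mem : -(1 : Matrix (Fin n → Fin 2) (Fin n → Fin 2) ℂ) ∉ S
  card_eq : S.ncard = 2 ^ n

/-- The stabilizer state associated to a stabilizer group: `ρ_S = 2^{-n} Σ_{Q ∈ S} Q`. -/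
def stabState {n : ℕ} (S : Set (Matrix (Fin n → Fin 2) (Fin n → Fin 2) ℂ)) :
    Matrix (Fin n → Fin 2) (Fin n → Fin 2) ℂ :=
  ((2 : ℂ) ^ n)⁻¹ • ∑ᶠ Q ∈ S, Q

lemma pauli_mul_self (i : Fin 4) : pauli i * pauli i = 1 := by
  fin_cases i <;> simp [pauli, Matrix.one_fin_two]

lemma trace_pauli_mul (i j : Fin 4) :
    (pauli i * pauli j).trace = if i = j then 2 else 0 := by
  fin_cases i <;> fin_cases j <;>
    simp [pauli, Matrix.trace_fin_two, Matrix.mul_apply, Fin.sum_univ_two,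
      Matrix.one_fin_two, Complex.I_mul_I] <;> norm_num

lemma pauliTensor_mul_apply {n : ℕ} (a b : Fin n → Fin 4) (z w : Fin n → Fin 2) :
    (pauliTensor a * pauliTensor b) z w = ∏ i, (pauli (a i) * pauli (b i)) (z i) (w i) := by
  rw [Matrix.mul_apply]
  simp only [Matrix.mul_apply, pauliTensor]
  rw [Fintype.prod_sum (fun i c => pauli (a i) (z i) c * pauli (b i) c (w i))]
  exact Finset.sum_congr rfl fun y _ => by rw [← Finset.prod_mul_distrib]

lemma pauliTensor_mul_self {n : ℕ} (a : Fin n → Fin 4) :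
    pauliTensor a * pauliTensor a = 1 := by
  ext z w
  rw [pauliTensor_mul_apply]
  simp only [pauli_mul_self, Matrix.one_apply]
  by_cases h : z = w
  · simp [h]
  · rw [if_neg h]
    obtain ⟨i, hi⟩ := Function.ne_iff.mp h
    apply Finset.prod_eq_zero (Finset.mem_univ i)
    simp [hi]

lemma trace_pauliTensor_mul {n : ℕ} (a b : Fin n → Fin 4) :
    (pauliTensor a * pauliTensor b).trace = if a = b then (2:ℂ) ^ n else 0 := by
  have h : (pauliTensor a * pauliTensor b).trace
      = ∏ i, (pauli (a i) * pauli (b i)).trace := by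
    simp only [Matrix.trace, Matrix.diag]
    simp only [pauliTensor_mul_apply]
    rw [Fintype.prod_sum (fun i c => (pauli (a i) * pauli (b i)) c c)]
  rw [h]
  simp only [trace_pauli_mul]
  by_cases h : a = b
  · simp [h]
  · rw [if_neg h]
    obtain ⟨i, hi⟩ := Function.ne_iff.mp h
    exact Finset.prod_eq_zero (Finset.mem_univ i) (if_neg hi)

lemma stab_bounds {n : ℕ} {S : Set (Matrix (Fin n → Fin 2) (Fin n → Fin 2) ℂ)}
    (hS : IsStabilizerGroup n S) :
    (∀ a : Fin n → Fin 4, ‖(pauliTensor a * stabState S).trace‖ ≤ 1) ∧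
      ∑ a : Fin n → Fin 4, ‖(pauliTensor a * stabState S).trace‖ ≤ (2:ℝ) ^ n := by
  classical
  have hfin : S.Finite :=
    Set.finite_of_ncard_ne_zero (by rw [hS.card_eq]; positivity)
  set F := hfin.toFinset with hFdef
  have hFS : ∀ x, x ∈ F ↔ x ∈ S := fun x => hfin.mem_toFinset
  have hFcard : F.card = 2 ^ n := by
    rw [← hS.card_eq, Set.ncard_eq_toFinset_card S hfin]
  choose eps aa hpm hrep using fun q : {x // x ∈ F} => hS.mem_pauli q ((hFS q).1 q.2)
  have habs : ∀ q, ‖eps q‖ = 1 := by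
    intro q; rcases hpm q with h | h <;> simp [h]
  have hinj : ∀ q q' : {x // x ∈ F}, aa q = aa q' → q = q' := by
    intro q q' h
    have key : ∀ (hq1 : eps q = eps q'),  q = q' := fun hq1 =>
      Subtype.ext (by rw [hrep q, hrep q', h, hq1])
    have contra : eps q * eps q' = -1 → False := by
      intro hm
      apply hS.neg_one_not_mem
      have hmem : (q : Matrix (Fin n → Fin 2) (Fin n → Fin 2) ℂ) * (q' : Matrix (Fin n → Fin 2) (Fin n → Fin 2) ℂ) ∈ S :=
        hS.mul_mem _ ((hFS _).1 q.2) _ ((hFS _).1 q'.2)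
      have heq : (q : Matrix (Fin n → Fin 2) (Fin n → Fin 2) ℂ) * (q' : Matrix (Fin n → Fin 2) (Fin n → Fin 2) ℂ) = -1 := by
        rw [hrep q, hrep q', h, smul_mul_smul_comm, pauliTensor_mul_self, hm]
        simp
      rwa [heq] at hmem
    rcases hpm q with h1 | h1 <;> rcases hpm q' with h2 | h2
    · exact key (h1.trans h2.symm)
    · exact absurd (by rw [h1, h2]; ring) (fun hc => contra hc)
    · exact absurd (by rw [h1, h2]; ring) (fun hc => contra hc)
    · exact key (h1.trans h2.symm)
  have hstab : stabState S = ((2:ℂ)^n)⁻¹ • ∑ Q ∈ F, Q := by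
    rw [stabState]
    congr 1
    rw [← hfin.coe_toFinset, finsum_mem_coe_finset]
  have hx : ∀ a, (pauliTensor a * stabState S).trace
      = ((2:ℂ)^n)⁻¹ * ∑ q ∈ F.attach, eps q * (if a = aa q then (2:ℂ)^n else 0) := by
    intro a
    rw [hstab, Matrix.mul_smul, Matrix.trace_smul, smul_eq_mul]
    congr 1
    rw [Matrix.mul_sum, Matrix.trace_sum,
      ← Finset.sum_attach F (fun Q => (pauliTensor a * Q).trace)]
    refine Finset.sum_congr rfl fun q _ => ?_
    rw [hrep q, Matrix.mul_smul, Matrix.trace_smul, smul_eq_mul, trace_pauliTensor_mul]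
  have habs_le : ∀ a, ‖(pauliTensor a * stabState S).trace‖
      ≤ ((2:ℝ)^n)⁻¹ * ∑ q ∈ F.attach, (if a = aa q then (2:ℝ)^n else 0) := by
    intro a
    rw [hx a, norm_mul]
    have h1 : ‖((2:ℂ)^n)⁻¹‖ = ((2:ℝ)^n)⁻¹ := by
      rw [norm_inv, norm_pow, Complex.norm_two]
    rw [h1]
    refine mul_le_mul_of_nonneg_left ?_ (by positivity)
    refine (norm_sum_le _ _).trans ?_
    refine le_of_eq (Finset.sum_congr rfl fun q _ => ?_)
    rw [norm_mul, habs q, one_mul]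
    split_ifs <;> simp
  constructor
  · intro a
    refine (habs_le a).trans ?_
    have hsum : ∑ q ∈ F.attach, (if a = aa q then (2:ℝ)^n else 0) ≤ (2:ℝ)^n := by
      rw [← Finset.sum_filter, Finset.sum_const, nsmul_eq_mul]
      have hcle : (F.attach.filter (fun q => a = aa q)).card ≤ 1 :=
        Finset.card_le_one.mpr (fun q hq q' hq' => hinj q q' (by
          rw [← (Finset.mem_filter.mp hq).2, ← (Finset.mem_filter.mp hq').2]))
      calc ((F.attach.filter (fun q => a = aa q)).card : ℝ) * (2:ℝ)^n
          ≤ 1 * (2:ℝ)^n := by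
            refine mul_le_mul_of_nonneg_right ?_ (by positivity)
            exact_mod_cast hcle
        _ = (2:ℝ)^n := one_mul _
    calc ((2:ℝ)^n)⁻¹ * ∑ q ∈ F.attach, (if a = aa q then (2:ℝ)^n else 0)
        ≤ ((2:ℝ)^n)⁻¹ * (2:ℝ)^n := by
          refine mul_le_mul_of_nonneg_left hsum (by positivity)
      _ = 1 := inv_mul_cancel₀ (by positivity)
  · calc ∑ a : Fin n → Fin 4, ‖(pauliTensor a * stabState S).trace‖
        ≤ ∑ a : Fin n → Fin 4,
            ((2:ℝ)^n)⁻¹ * ∑ q ∈ F.attach, (if a = aa q then (2:ℝ)^n else 0) :=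
          Finset.sum_le_sum fun a _ => habs_le a
      _ = ((2:ℝ)^n)⁻¹ * ∑ q ∈ F.attach,
            ∑ a : Fin n → Fin 4, (if a = aa q then (2:ℝ)^n else 0) := by
          rw [← Finset.mul_sum, Finset.sum_comm]
      _ = ((2:ℝ)^n)⁻¹ * ∑ q ∈ F.attach, (2:ℝ)^n := by
          congr 1
          refine Finset.sum_congr rfl fun q _ => ?_
          simp
      _ = ((2:ℝ)^n)⁻¹ * ((2:ℝ)^n * (2:ℝ)^n) := by
          rw [Finset.sum_const, Finset.card_attach, hFcard]
          push_cast
          ring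
      _ = (2:ℝ)^n := inv_mul_cancel_left₀ (by positivity) _

/-- The average absolute correlation of any collection of at least two distinct stabilizer
states, under the uniform distribution on Pauli measurements, is at most `2^{-n}`. -/
theorem stabState_average_correlation {n : ℕ} (hn : 1 ≤ n)
    (T : Finset (Set (Matrix (Fin n → Fin 2) (Fin n → Fin 2) ℂ)))
    (hT : ∀ S ∈ T, IsStabilizerGroup n S) (hcard : 2 ≤ T.card) :
    (1 / (T.card : ℝ) ^ 2) *
        ∑ S ∈ T, ∑ S' ∈ T,
          ‖((1 / (2 * 4 ^ n) : ℂ) *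
              ∑ ε ∈ ({1, -1} : Finset ℂ), ∑ a : Fin n → Fin 4,
                ((ε • pauliTensor a) * stabState S).trace *
                  ((ε • pauliTensor a) * stabState S').trace)‖ ≤
      ((2 : ℝ) ^ n)⁻¹ := by

  classical
  have hpair : ∀ S ∈ T, ∀ S' ∈ T,
      ‖((1 / (2 * 4 ^ n) : ℂ) *
          ∑ ε ∈ ({1, -1} : Finset ℂ), ∑ a : Fin n → Fin 4,
            ((ε • pauliTensor a) * stabState S).trace *
              ((ε • pauliTensor a) * stabState S').trace)‖ ≤ ((2:ℝ)^n)⁻¹ := by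
    intro S hs S' hs'
    obtain ⟨hb1, hb2⟩ := stab_bounds (hT S hs)
    obtain ⟨hb1', hb2'⟩ := stab_bounds (hT S' hs')
    have hterm : ∀ (ε : ℂ) (a : Fin n → Fin 4),
        ((ε • pauliTensor a) * stabState S).trace *
          ((ε • pauliTensor a) * stabState S').trace
        = ε ^ 2 * ((pauliTensor a * stabState S).trace *
            (pauliTensor a * stabState S').trace) := by
      intro ε a
      rw [Matrix.smul_mul, Matrix.trace_smul, Matrix.smul_mul, Matrix.trace_smul,
        smul_eq_mul, smul_eq_mul]
      ring
    have hsum : ∑ ε ∈ ({1, -1} : Finset ℂ), ∑ a : Fin n → Fin 4,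
        ((ε • pauliTensor a) * stabState S).trace *
          ((ε • pauliTensor a) * stabState S').trace
        = 2 * ∑ a : Fin n → Fin 4,
            (pauliTensor a * stabState S).trace * (pauliTensor a * stabState S').trace := by
      rw [Finset.sum_insert (by norm_num), Finset.sum_singleton]
      simp only [hterm]
      rw [← Finset.mul_sum, ← Finset.mul_sum]
      ring_nf
    rw [hsum, norm_mul, norm_mul]
    have e1 : ‖(1:ℂ) / (2 * 4 ^ n)‖ = 1 / (2 * 4 ^ n) := by
      norm_num [norm_div, norm_mul, norm_pow, Complex.norm_two,
        Complex.norm_ofNat]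
    have e3 : ‖∑ a : Fin n → Fin 4,
        (pauliTensor a * stabState S).trace * (pauliTensor a * stabState S').trace‖
        ≤ (2:ℝ)^n := by
      refine (norm_sum_le _ _).trans ?_
      calc ∑ a : Fin n → Fin 4, ‖
            (pauliTensor a * stabState S).trace * (pauliTensor a * stabState S').trace‖
          = ∑ a : Fin n → Fin 4, ‖(pauliTensor a * stabState S).trace‖ *
              ‖(pauliTensor a * stabState S').trace‖ := by
            simp [norm_mul]
        _ ≤ ∑ a : Fin n → Fin 4, ‖(pauliTensor a * stabState S).trace‖ * 1 :=
            Finset.sum_le_sum fun a _ =>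
              mul_le_mul_of_nonneg_left (hb1' a) (norm_nonneg _)
        _ = ∑ a : Fin n → Fin 4, ‖(pauliTensor a * stabState S).trace‖ := by
            simp
        _ ≤ (2:ℝ)^n := hb2
    rw [e1, Complex.norm_two]
    calc (1 / (2 * 4 ^ n) : ℝ) * (2 * ‖∑ a : Fin n → Fin 4,
          (pauliTensor a * stabState S).trace * (pauliTensor a * stabState S').trace‖)
        ≤ (1 / (2 * 4 ^ n) : ℝ) * (2 * (2:ℝ)^n) := by
          refine mul_le_mul_of_nonneg_left ?_ (by positivity)
          exact mul_le_mul_of_nonneg_left e3 (by norm_num)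
      _ = ((2:ℝ)^n)⁻¹ := by
          rw [show (4:ℝ)^n = 2^n * 2^n by rw [← mul_pow]; norm_num]
          field_simp
  have hTpos : (0:ℝ) < (T.card : ℝ) := by
    have : 0 < T.card := lt_of_lt_of_le (by norm_num) hcard
    exact_mod_cast this
  calc (1 / (T.card : ℝ) ^ 2) *
        ∑ S ∈ T, ∑ S' ∈ T,
          ‖((1 / (2 * 4 ^ n) : ℂ) *
              ∑ ε ∈ ({1, -1} : Finset ℂ), ∑ a : Fin n → Fin 4,
                ((ε • pauliTensor a) * stabState S).trace *
                  ((ε • pauliTensor a) * stabState S').trace)‖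
      ≤ (1 / (T.card : ℝ) ^ 2) * ∑ S ∈ T, ∑ S' ∈ T, ((2:ℝ)^n)⁻¹ := by
        refine mul_le_mul_of_nonneg_left ?_ (by positivity)
        refine Finset.sum_le_sum fun S hs => Finset.sum_le_sum fun S' hs' => ?_
        exact hpair S hs S' hs'
    _ = ((2:ℝ)^n)⁻¹ := by
        simp only [Finset.sum_const, nsmul_eq_mul]
        field_simp
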